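/- arXiv:2311.03506 — 2 statements merged into one kernel-verified Lean document; each statement's English description precedes it below -/
import Mathlib

section
/- For α ≥ n + 1 (n ≥ 1), 𝔪_{2n,α} ≥ d·(𝔪_{n,α} ⊗ 𝔪_{n,α}) as measures on ℝⁿ × ℝⁿ, where d = Γ(α − n/2)²/(Γ(α − n)Γ(α)); moreover d ≥ 1/2 whenever α ≥ n². -/
open MeasureTheory Real
open scoped ENNReal

noncomputable def cauchyMeasure (n : ℕ) (β : ℝ) : Measure (EuclideanSpace ℝ (Fin n)) :=
  volume.withDensity fun x =>
    ENNReal.ofReal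
      ((Real.pi ^ ((n : ℝ) / 2) * Real.Gamma (β - (n : ℝ) / 2) / Real.Gamma β)⁻¹ *
        (1 + ‖x‖ ^ 2) ^ (-β))

noncomputable def cauchyMeasure2 (n : ℕ) (α : ℝ) :
    Measure (EuclideanSpace ℝ (Fin n) × EuclideanSpace ℝ (Fin n)) :=
  volume.withDensity fun q =>
    ENNReal.ofReal
      ((Real.pi ^ (n : ℝ) * Real.Gamma (α - n) / Real.Gamma α)⁻¹ *
        (1 + ‖q.1‖ ^ 2 + ‖q.2‖ ^ 2) ^ (-α))

section Aux
open Finset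

private lemma weier' (a : ℕ → ℝ) (ha : ∀ k, 0 ≤ a k) (n : ℕ) :
    (∏ k ∈ range n, (1 + a k)) * (1 - ∑ k ∈ range n, a k) ≤ 1 := by
  induction n with
  | zero => simp
  | succ n ih =>
    rw [prod_range_succ, sum_range_succ]
    have hP : (0:ℝ) ≤ ∏ k ∈ range n, (1 + a k) :=
      prod_nonneg fun k _ => by linarith [ha k]
    have hS : 0 ≤ ∑ k ∈ range n, a k := sum_nonneg fun k _ => ha k
    nlinarith [ha n, mul_nonneg hP (ha n), mul_nonneg (mul_nonneg hP (ha n)) hS,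
      mul_nonneg (mul_nonneg hP (ha n)) (ha n)]

private lemma gauss_sum' (n : ℕ) : ∑ k ∈ range n, ((k:ℝ) + 1) = n * (n + 1) / 2 := by
  induction n with
  | zero => simp
  | succ n ih => rw [sum_range_succ, ih]; push_cast; ring

private lemma Gamma_sq_le' {p q : ℝ} (hp : 0 < p) (hq : 0 < q) :
    Gamma ((p + q) / 2) ^ 2 ≤ Gamma p * Gamma q := by
  have h := Real.convexOn_log_Gamma.2 (Set.mem_Ioi.2 hp) (Set.mem_Ioi.2 hq)
    (by norm_num : (0:ℝ) ≤ 1/2) (by norm_num : (0:ℝ) ≤ 1/2) (by norm_num)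
  simp only [Function.comp_apply, smul_eq_mul] at h
  have hpt : (1/2:ℝ) * p + (1/2:ℝ) * q = (p + q) / 2 := by ring
  rw [hpt] at h
  have hm : 0 < Gamma ((p + q) / 2) := Gamma_pos_of_pos (by linarith)
  have hgp : 0 < Gamma p := Gamma_pos_of_pos hp
  have hgq : 0 < Gamma q := Gamma_pos_of_pos hq
  calc Gamma ((p+q)/2) ^ 2 = exp (log (Gamma ((p+q)/2)) + log (Gamma ((p+q)/2))) := by
        rw [exp_add, exp_log hm]; ring
    _ ≤ exp (log (Gamma p) + log (Gamma q)) := exp_le_exp.2 (by linarith)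
    _ = Gamma p * Gamma q := by rw [exp_add, exp_log hgp, exp_log hgq]

private lemma gammaA' (x : ℝ) (hx : 1 ≤ x) (n : ℕ) :
    Gamma x ^ 2 * ∏ k ∈ range n, (x + ((k:ℝ) - 1) / 2) ≤ Gamma (x + n / 2) ^ 2 := by
  induction n with
  | zero => simp
  | succ n ih =>
    rw [prod_range_succ, ← mul_assoc]
    have hy : (0:ℝ) < x + ((n:ℝ) - 1) / 2 := by
      have : (0:ℝ) ≤ (n:ℝ) := n.cast_nonneg
      linarith
    have hrec : Gamma (x + ((n:ℝ) + 1) / 2)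
        = (x + ((n:ℝ) - 1) / 2) * Gamma (x + ((n:ℝ) - 1) / 2) := by
      have e : x + ((n:ℝ) + 1) / 2 = (x + ((n:ℝ) - 1) / 2) + 1 := by ring
      rw [e, Real.Gamma_add_one (ne_of_gt hy)]
    have hmid : Gamma (x + (n:ℝ) / 2) ^ 2
        ≤ Gamma (x + ((n:ℝ) - 1) / 2) * Gamma (x + ((n:ℝ) + 1) / 2) := by
      have h := Gamma_sq_le' (p := x + ((n:ℝ) - 1) / 2) (q := x + ((n:ℝ) + 1) / 2) hy
        (by linarith)
      have e : (x + ((n:ℝ) - 1) / 2 + (x + ((n:ℝ) + 1) / 2)) / 2 = x + (n:ℝ) / 2 := by ring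
      rwa [e] at h
    have step : (x + ((n:ℝ) - 1) / 2) * Gamma (x + (n:ℝ) / 2) ^ 2
        ≤ Gamma (x + ((n:ℝ) + 1) / 2) ^ 2 := by
      calc (x + ((n:ℝ) - 1) / 2) * Gamma (x + (n:ℝ) / 2) ^ 2
          ≤ (x + ((n:ℝ) - 1) / 2) * (Gamma (x + ((n:ℝ) - 1) / 2) * Gamma (x + ((n:ℝ) + 1) / 2)) :=
            mul_le_mul_of_nonneg_left hmid hy.le
        _ = Gamma (x + ((n:ℝ) + 1) / 2) ^ 2 := by rw [hrec]; ring
    have hcast : ((n+1:ℕ):ℝ) = (n:ℝ) + 1 := by push_cast; ring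
    rw [hcast]
    calc (Gamma x ^ 2 * ∏ k ∈ range n, (x + ((k:ℝ) - 1) / 2)) * (x + ((n:ℝ) - 1) / 2)
        ≤ Gamma (x + (n:ℝ) / 2) ^ 2 * (x + ((n:ℝ) - 1) / 2) :=
          mul_le_mul_of_nonneg_right ih hy.le
      _ ≤ Gamma (x + ((n:ℝ) + 1) / 2) ^ 2 := by rw [mul_comm]; exact step

private lemma gammaB' (x : ℝ) (hx : 0 < x) (n : ℕ) :
    Gamma (x + n) = Gamma x * ∏ k ∈ range n, (x + (k:ℝ)) := by
  induction n with
  | zero => simp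
  | succ n ih =>
    rw [prod_range_succ, ← mul_assoc, ← ih]
    have e : x + ((n+1:ℕ):ℝ) = (x + (n:ℝ)) + 1 := by push_cast; ring
    rw [e, Real.Gamma_add_one (by positivity)]
    ring

private lemma prodA_le' (n : ℕ) (hn : 1 ≤ n) (x : ℝ) (hx1 : 1 ≤ x) (hx2 : (n:ℝ)^2 - n ≤ x) :
    ∏ k ∈ range n, (1 + ((k:ℝ) + 1) / (2*x + (k:ℝ) - 1)) ≤ 2 := by
  have hden : ∀ k : ℕ, (0:ℝ) < 2*x + (k:ℝ) - 1 := fun k => by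
    have : (0:ℝ) ≤ (k:ℝ) := k.cast_nonneg; linarith
  have ha : ∀ k : ℕ, 0 ≤ ((k:ℝ) + 1) / (2*x + (k:ℝ) - 1) := fun k =>
    div_nonneg (by positivity) (hden k).le
  have hbnd : ∀ (k : ℕ) (b : ℝ), 0 < b → b ≤ 2*x + (k:ℝ) - 1 →
      ((k:ℝ)+1)/(2*x+(k:ℝ)-1) ≤ ((k:ℝ)+1)/b := fun k b hb hle =>
    div_le_div_of_nonneg_left (by positivity) hb hle
  have key : (∑ k ∈ range n, ((k:ℝ) + 1) / (2*x + (k:ℝ) - 1)) ≤ 1/2 →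
      ∏ k ∈ range n, (1 + ((k:ℝ) + 1) / (2*x + (k:ℝ) - 1)) ≤ 2 := by
    intro hS
    have hw := weier' (fun k => ((k:ℝ) + 1) / (2*x + (k:ℝ) - 1)) ha n
    have hP0 : 0 ≤ ∏ k ∈ range n, (1 + ((k:ℝ) + 1) / (2*x + (k:ℝ) - 1)) :=
      prod_nonneg fun k _ => by linarith [ha k]
    set P := ∏ k ∈ range n, (1 + ((k:ℝ) + 1) / (2*x + (k:ℝ) - 1))
    set S := ∑ k ∈ range n, ((k:ℝ) + 1) / (2*x + (k:ℝ) - 1)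
    nlinarith [mul_nonneg hP0 (by linarith : (0:ℝ) ≤ 1/2 - S)]
  rcases n with _ | _ | _ | _ | m
  · omega
  · rw [prod_range_one]
    have h0 := hbnd 0 1 one_pos (by push_cast; linarith)
    push_cast at h0 ⊢
    norm_num at h0 ⊢
    linarith
  · rw [prod_range_succ, prod_range_one]
    have hx : (2:ℝ) ≤ x := by push_cast at hx2; nlinarith
    have h0 := hbnd 0 3 (by norm_num) (by push_cast; linarith)
    have h1 := hbnd 1 4 (by norm_num) (by push_cast; linarith)
    have p0 := ha 0
    have p1 := ha 1
    push_cast at h0 h1 p0 p1 ⊢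
    norm_num at h0 h1 p0 p1 ⊢
    nlinarith [h0, h1, p0, p1]
  · apply key
    have hx : (6:ℝ) ≤ x := by push_cast at hx2; nlinarith
    rw [sum_range_succ, sum_range_succ, sum_range_one]
    have h0 := hbnd 0 11 (by norm_num) (by push_cast; linarith)
    have h1 := hbnd 1 12 (by norm_num) (by push_cast; linarith)
    have h2 := hbnd 2 13 (by norm_num) (by push_cast; linarith)
    push_cast at h0 h1 h2 ⊢
    norm_num at h0 h1 h2 ⊢
    linarith
  · apply key
    set n := m + 4 with hn_def
    have hn4 : (4:ℝ) ≤ (n:ℝ) := by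
      have : 4 ≤ n := by omega
      exact_mod_cast this
    have hsum : ∑ k ∈ range n, ((k:ℝ)+1)/(2*x+(k:ℝ)-1)
        ≤ ∑ k ∈ range n, ((k:ℝ)+1)/(2*x-1) :=
      sum_le_sum fun k _ => hbnd k (2*x-1) (by linarith)
        (by have hk : (0:ℝ) ≤ (k:ℝ) := k.cast_nonneg; linarith)
    rw [← sum_div, gauss_sum'] at hsum
    have h2x : (n:ℝ)*((n:ℝ)+1) ≤ 2*x - 1 := by nlinarith [hx2]
    have hfin : ((n:ℝ)*((n:ℝ)+1)/2)/(2*x-1) ≤ 1/2 := by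
      rw [div_le_div_iff₀ (by linarith) (by norm_num)]
      linarith
    linarith

private lemma prodIneq' (n : ℕ) (hn : 1 ≤ n) (x : ℝ) (hx1 : 1 ≤ x)
    (hx2 : (n:ℝ)^2 - n ≤ x) :
    ∏ k ∈ range n, (x + (k:ℝ)) ≤ 2 * ∏ k ∈ range n, (x + ((k:ℝ) - 1) / 2) := by
  have hden : ∀ k : ℕ, (0:ℝ) < 2*x + (k:ℝ) - 1 := fun k => by
    have : (0:ℝ) ≤ (k:ℝ) := k.cast_nonneg; linarith
  have ha : ∀ k : ℕ, 0 ≤ ((k:ℝ) + 1) / (2*x + (k:ℝ) - 1) := fun k =>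
    div_nonneg (by positivity) (hden k).le
  have hfac : ∀ k : ℕ, x + (k:ℝ)
      = (x + ((k:ℝ) - 1) / 2) * (1 + ((k:ℝ) + 1) / (2*x + (k:ℝ) - 1)) := by
    intro k
    have hne : 2*x + (k:ℝ) - 1 ≠ 0 := (hden k).ne'
    rw [one_add_div hne, mul_div_assoc', eq_div_iff hne]
    ring
  have hsplit : ∏ k ∈ range n, (x + (k:ℝ))
      = (∏ k ∈ range n, (x + ((k:ℝ) - 1) / 2))
        * ∏ k ∈ range n, (1 + ((k:ℝ) + 1) / (2*x + (k:ℝ) - 1)) := by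
    rw [← prod_mul_distrib]
    exact prod_congr rfl fun k _ => hfac k
  have hQpos : (0:ℝ) ≤ ∏ k ∈ range n, (x + ((k:ℝ) - 1) / 2) := by
    apply prod_nonneg
    intro k _
    have : (0:ℝ) ≤ (k:ℝ) := k.cast_nonneg
    linarith
  have hP2 := prodA_le' n hn x hx1 hx2
  rw [hsplit]
  calc (∏ k ∈ range n, (x + ((k:ℝ) - 1) / 2))
        * ∏ k ∈ range n, (1 + ((k:ℝ) + 1) / (2*x + (k:ℝ) - 1))
      ≤ (∏ k ∈ range n, (x + ((k:ℝ) - 1) / 2)) * 2 := mul_le_mul_of_nonneg_left hP2 hQpos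
    _ = 2 * ∏ k ∈ range n, (x + ((k:ℝ) - 1) / 2) := mul_comm _ _

private lemma part2' (n : ℕ) (hn : 1 ≤ n) (α : ℝ) (hα : (n : ℝ) + 1 ≤ α)
    (hα2 : (n:ℝ)^2 ≤ α) :
    1 / 2 ≤ Real.Gamma (α - (n : ℝ) / 2) ^ 2 / (Real.Gamma (α - n) * Real.Gamma α) := by
  set x := α - (n:ℝ) with hx_def
  have hx1 : 1 ≤ x := by simp [hx_def]; linarith
  have hn1 : (1:ℝ) ≤ (n:ℝ) := by exact_mod_cast hn
  have hx2 : (n:ℝ)^2 - n ≤ x := by simp [hx_def]; linarith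
  have e1 : α - (n:ℝ)/2 = x + (n:ℝ)/2 := by rw [hx_def]; ring
  have e2 : α = x + (n:ℝ) := by rw [hx_def]; ring
  have hΓx : 0 < Gamma x := Gamma_pos_of_pos (by linarith)
  have hB := gammaB' x (by linarith) n
  have hA := gammaA' x hx1 n
  have hP := prodIneq' n hn x hx1 hx2
  have hchain : Gamma x * Gamma (x + n) ≤ 2 * Gamma (x + (n:ℝ)/2) ^ 2 := by
    calc Gamma x * Gamma (x + n) = Gamma x ^ 2 * ∏ k ∈ range n, (x + (k:ℝ)) := by
          rw [hB]; ring
      _ ≤ Gamma x ^ 2 * (2 * ∏ k ∈ range n, (x + ((k:ℝ) - 1) / 2)) :=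
          mul_le_mul_of_nonneg_left hP (by positivity)
      _ = 2 * (Gamma x ^ 2 * ∏ k ∈ range n, (x + ((k:ℝ) - 1) / 2)) := by ring
      _ ≤ 2 * Gamma (x + (n:ℝ)/2) ^ 2 := by linarith
  rw [e1, e2]
  rw [le_div_iff₀ (mul_pos hΓx (Gamma_pos_of_pos (by linarith : (0:ℝ) < x + n)))]
  nlinarith [hchain]

private lemma ptwise' (n : ℕ) (hn : 1 ≤ n) (α : ℝ) (hα : (n : ℝ) + 1 ≤ α) (a b : ℝ)
    (ha : 0 ≤ a) (hb : 0 ≤ b) :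
    Real.Gamma (α - (n : ℝ) / 2) ^ 2 / (Real.Gamma (α - n) * Real.Gamma α) *
      ((Real.pi ^ ((n : ℝ) / 2) * Real.Gamma (α - (n : ℝ) / 2) / Real.Gamma α)⁻¹ * (1 + a) ^ (-α) *
        ((Real.pi ^ ((n : ℝ) / 2) * Real.Gamma (α - (n : ℝ) / 2) / Real.Gamma α)⁻¹ *
          (1 + b) ^ (-α)))
      ≤ (Real.pi ^ (n : ℝ) * Real.Gamma (α - n) / Real.Gamma α)⁻¹ * (1 + a + b) ^ (-α) := by
  have hn1 : (1:ℝ) ≤ (n:ℝ) := by exact_mod_cast hn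
  have hπ : (0:ℝ) < Real.pi ^ ((n:ℝ)/2) := rpow_pos_of_pos pi_pos _
  have hG0 : 0 < Gamma α := Gamma_pos_of_pos (by linarith)
  have hG1 : 0 < Gamma (α - (n:ℝ)/2) := Gamma_pos_of_pos (by linarith)
  have hG2 : 0 < Gamma (α - (n:ℝ)) := Gamma_pos_of_pos (by linarith)
  have hππ : Real.pi ^ ((n:ℝ)/2) * Real.pi ^ ((n:ℝ)/2) = Real.pi ^ (n:ℝ) := by
    rw [← Real.rpow_add pi_pos]; norm_num
  have habs : ∀ p g0 g1 g2 : ℝ, 0 < p → 0 < g0 → 0 < g1 → 0 < g2 →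
      g1 ^ 2 / (g2 * g0) * ((p * g1 / g0)⁻¹ * (p * g1 / g0)⁻¹) = (p * p * g2 / g0)⁻¹ := by
    intro p g0 g1 g2 hp hg0 hg1 hg2
    field_simp
  have hkey : Gamma (α - (n:ℝ)/2) ^ 2 / (Gamma (α - n) * Gamma α) *
      ((Real.pi ^ ((n:ℝ)/2) * Gamma (α - (n:ℝ)/2) / Gamma α)⁻¹ *
        (Real.pi ^ ((n:ℝ)/2) * Gamma (α - (n:ℝ)/2) / Gamma α)⁻¹)
      = (Real.pi ^ (n:ℝ) * Gamma (α - n) / Gamma α)⁻¹ := by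
    rw [← hππ]
    exact habs _ _ _ _ hπ hG0 hG1 hG2
  have hr1 : (0:ℝ) < 1 + a := by linarith
  have hr2 : (0:ℝ) < 1 + b := by linarith
  have hmul : (1 + a) ^ (-α) * (1 + b) ^ (-α) = ((1 + a) * (1 + b)) ^ (-α) :=
    (Real.mul_rpow hr1.le hr2.le).symm
  have hstep : ((1 + a) * (1 + b)) ^ (-α) ≤ (1 + a + b) ^ (-α) :=
    Real.rpow_le_rpow_of_nonpos (by linarith) (by nlinarith) (by linarith)
  calc Gamma (α - (n:ℝ)/2) ^ 2 / (Gamma (α - n) * Gamma α) *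
        ((Real.pi ^ ((n:ℝ)/2) * Gamma (α - (n:ℝ)/2) / Gamma α)⁻¹ * (1 + a) ^ (-α) *
          ((Real.pi ^ ((n:ℝ)/2) * Gamma (α - (n:ℝ)/2) / Gamma α)⁻¹ * (1 + b) ^ (-α)))
      = (Gamma (α - (n:ℝ)/2) ^ 2 / (Gamma (α - n) * Gamma α) *
          ((Real.pi ^ ((n:ℝ)/2) * Gamma (α - (n:ℝ)/2) / Gamma α)⁻¹ *
            (Real.pi ^ ((n:ℝ)/2) * Gamma (α - (n:ℝ)/2) / Gamma α)⁻¹)) *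
          ((1 + a) ^ (-α) * (1 + b) ^ (-α)) := by ring
    _ = (Real.pi ^ (n:ℝ) * Gamma (α - n) / Gamma α)⁻¹ * (((1 + a) * (1 + b)) ^ (-α)) := by
        rw [hkey, hmul]
    _ ≤ (Real.pi ^ (n:ℝ) * Gamma (α - n) / Gamma α)⁻¹ * (1 + a + b) ^ (-α) := by
        apply mul_le_mul_of_nonneg_left hstep
        positivity

private lemma wd_prod' {α β : Type*} [MeasurableSpace α] [MeasurableSpace β]
    (μ : Measure α) (ν : Measure β) [SigmaFinite μ] [SigmaFinite ν]
    (f : α → ℝ≥0∞) (g : β → ℝ≥0∞) (hf : Measurable f) (hg : Measurable g)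
    [SigmaFinite (μ.withDensity f)] [SigmaFinite (ν.withDensity g)] :
    (μ.withDensity f).prod (ν.withDensity g)
      = (μ.prod ν).withDensity (fun p => f p.1 * g p.2) := by
  refine Measure.prod_eq (μ := μ.withDensity f) (ν := ν.withDensity g)
    (μν := (μ.prod ν).withDensity (fun p => f p.1 * g p.2)) (fun s t hs ht => ?_)
  rw [withDensity_apply _ (hs.prod ht), ← Measure.prod_restrict,
    lintegral_prod_mul hf.aemeasurable hg.aemeasurable,
    withDensity_apply _ hs, withDensity_apply _ ht]

end Aux

theorem cauchy_product_comparison (n : ℕ) (hn : 1 ≤ n) (α : ℝ) (hα : (n : ℝ) + 1 ≤ α) :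
    (∀ B : Set (EuclideanSpace ℝ (Fin n) × EuclideanSpace ℝ (Fin n)), MeasurableSet B →
      ENNReal.ofReal
          (Real.Gamma (α - (n : ℝ) / 2) ^ 2 / (Real.Gamma (α - n) * Real.Gamma α)) *
        ((cauchyMeasure n α).prod (cauchyMeasure n α)) B ≤ cauchyMeasure2 n α B) ∧
    ((n : ℝ) ^ 2 ≤ α →
      1 / 2 ≤ Real.Gamma (α - (n : ℝ) / 2) ^ 2 / (Real.Gamma (α - n) * Real.Gamma α)) := by
  constructor
  · intro B hB
    have hn1 : (1:ℝ) ≤ (n:ℝ) := by exact_mod_cast hn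
    have hG0 : 0 < Gamma α := Gamma_pos_of_pos (by linarith)
    have hG1 : 0 < Gamma (α - (n:ℝ)/2) := Gamma_pos_of_pos (by linarith)
    have hG2 : 0 < Gamma (α - (n:ℝ)) := Gamma_pos_of_pos (by linarith)
    have hd0 : 0 ≤ Gamma (α - (n:ℝ)/2) ^ 2 / (Gamma (α - n) * Gamma α) := by positivity
    set c : ℝ := Real.pi ^ ((n : ℝ) / 2) * Real.Gamma (α - (n : ℝ) / 2) / Real.Gamma α with hc_def
    have hc : 0 < c := by
      rw [hc_def]
      have := rpow_pos_of_pos pi_pos ((n:ℝ)/2)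
      positivity
    have hcont : Continuous fun x : EuclideanSpace ℝ (Fin n) =>
        c⁻¹ * (1 + ‖x‖ ^ 2) ^ (-α) := by
      apply continuous_const.mul
      apply Continuous.rpow_const (by continuity)
      intro x
      left
      positivity
    have hmf : Measurable fun x : EuclideanSpace ℝ (Fin n) =>
        ENNReal.ofReal (c⁻¹ * (1 + ‖x‖ ^ 2) ^ (-α)) :=
      (measurable_coe_nnreal_ennreal.comp hcont.measurable.real_toNNReal)
    unfold cauchyMeasure cauchyMeasure2
    rw [MeasureTheory.Measure.volume_eq_prod]
    rw [← hc_def]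
    rw [wd_prod' volume volume _ _ hmf hmf]
    rw [withDensity_apply _ hB, withDensity_apply _ hB,
      ← lintegral_const_mul' _ _ ENNReal.ofReal_ne_top]
    apply lintegral_mono
    intro q
    dsimp only
    have hu : 0 ≤ c⁻¹ * (1 + ‖q.1‖ ^ 2) ^ (-α) := by positivity
    have hv : 0 ≤ c⁻¹ * (1 + ‖q.2‖ ^ 2) ^ (-α) := by positivity
    rw [← ENNReal.ofReal_mul hu, ← ENNReal.ofReal_mul hd0]
    apply ENNReal.ofReal_le_ofReal
    have := ptwise' n hn α hα (‖q.1‖ ^ 2) (‖q.2‖ ^ 2) (by positivity) (by positivity)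
    rw [hc_def]
    convert this using 2
  · intro hα2
    exact part2' n hn α hα hα2
end

section
/- For x ≥ 1/2, √(2e)·(x/e)^x ≤ Γ(x + 1/2) ≤ √(2π)·(x/e)^x. Consequently, for h ≥ 0 and x ≥ h + 1/2, Γ(x − h + 1/2)/Γ(x + 1/2) ≤ √(π/e)·(e/x)^h. -/
open Real Filter Set

namespace BatirAux

noncomputable def psi (t : ℝ) : ℝ := deriv (fun s => Real.log (Real.Gamma s)) t

lemma hasDerivAt_logGamma {t : ℝ} (ht : 0 < t) :
    HasDerivAt (fun s => Real.log (Real.Gamma s)) (psi t) t := by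
  have hg : DifferentiableAt ℝ Real.Gamma t :=
    Real.differentiableAt_Gamma (fun m => by
      have : (0:ℝ) ≤ m := Nat.cast_nonneg m
      intro hc; rw [hc] at ht; linarith)
  exact (hg.log (Real.Gamma_pos_of_pos ht).ne').hasDerivAt

lemma psi_add_one {t : ℝ} (ht : 0 < t) : psi (t + 1) = psi t + 1 / t := by
  have h1 : HasDerivAt (fun s => Real.log (Real.Gamma (s + 1))) (psi (t + 1)) t :=
    (hasDerivAt_logGamma (by linarith)).comp_add_const t 1
  have h2 : HasDerivAt (fun s => Real.log s + Real.log (Real.Gamma s)) (t⁻¹ + psi t) t :=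
    (Real.hasDerivAt_log ht.ne').add (hasDerivAt_logGamma ht)
  have heq : (fun s => Real.log s + Real.log (Real.Gamma s)) =ᶠ[nhds t]
      (fun s => Real.log (Real.Gamma (s + 1))) := by
    filter_upwards [eventually_gt_nhds ht] with s hs
    rw [Real.Gamma_add_one hs.ne', Real.log_mul hs.ne' (Real.Gamma_pos_of_pos hs).ne']
  have h1' : HasDerivAt (fun s => Real.log s + Real.log (Real.Gamma s)) (psi (t+1)) t :=
    h1.congr_of_eventuallyEq heq
  have := h1'.unique h2
  rw [this]; ring

lemma log_sub_one_le_psi {t : ℝ} (ht : 1 < t) : Real.log (t - 1) ≤ psi t := by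
  have hc : ConvexOn ℝ (Set.Ioi (0:ℝ)) (fun s => Real.log (Real.Gamma s)) :=
    Real.convexOn_log_Gamma
  have hs := hc.slope_le_of_hasDerivAt (x := t - 1) (y := t)
    (by simp; linarith) (by simp; linarith) (by linarith)
    (hasDerivAt_logGamma (by linarith))
  have hΓ : Real.Gamma t = (t - 1) * Real.Gamma (t - 1) := by
    have := Real.Gamma_add_one (s := t - 1) (by intro h; rw [sub_eq_zero] at h; simp [← h] at ht)
    simpa using this
  rw [slope_def_field, hΓ, Real.log_mul (by linarith) (Real.Gamma_pos_of_pos (by linarith)).ne'] at hs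
  calc Real.log (t-1)
      = (Real.log (t-1) + Real.log (Real.Gamma (t-1)) - Real.log (Real.Gamma (t-1))) / (t - (t-1)) := by
        field_simp; ring
    _ ≤ psi t := hs

lemma aux_exp {u : ℝ} (hu : 0 ≤ u) : (1 - u) * Real.exp (2*u) ≤ 1 + u := by
  have key : ∀ v : ℝ, HasDerivAt (fun w => 1 + w - (1 - w) * Real.exp (2*w))
      (1 - (1 - 2*v) * Real.exp (2*v)) v := by
    intro v
    have h1 : HasDerivAt (fun w : ℝ => 1 + w) 1 v := by
      simpa using (hasDerivAt_id v).const_add 1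
    have h2 : HasDerivAt (fun w : ℝ => Real.exp (2*w)) (2 * Real.exp (2*v)) v := by
      have := ((hasDerivAt_id v).const_mul 2).exp
      simpa [mul_comm] using this
    have h3 : HasDerivAt (fun w : ℝ => (1 - w) * Real.exp (2*w))
        ((-1) * Real.exp (2*v) + (1 - v) * (2 * Real.exp (2*v))) v := by
      exact (((hasDerivAt_id v).const_sub 1)).mul h2
    have := h1.sub h3
    exact this.congr_deriv (by ring)
  have mono : MonotoneOn (fun w => 1 + w - (1 - w) * Real.exp (2*w)) (Set.Ici (0:ℝ)) := by
    apply monotoneOn_of_deriv_nonneg (convex_Ici 0)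
    · exact fun x _ => (key x).differentiableAt.continuousAt.continuousWithinAt
    · exact fun x _ => (key x).differentiableAt.differentiableWithinAt
    · intro x _
      rw [(key x).deriv]
      have h4 : (1 - 2*x) * Real.exp (2*x) ≤ 1 := by
        have h5 : 1 - 2*x ≤ Real.exp (-(2*x)) := by
          have := Real.add_one_le_exp (-(2*x)); linarith
        calc (1 - 2*x) * Real.exp (2*x) ≤ Real.exp (-(2*x)) * Real.exp (2*x) :=
              mul_le_mul_of_nonneg_right h5 (Real.exp_pos _).le
          _ = 1 := by rw [← Real.exp_add]; simp
      linarith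
  have := mono (Set.self_mem_Ici) (Set.mem_Ici.2 hu) hu
  simp at this
  linarith

lemma log_step {s : ℝ} (hs : 1/2 < s) : 1/s ≤ Real.log (s + 1/2) - Real.log (s - 1/2) := by
  have hs0 : 0 < s := by linarith
  have hu := aux_exp (u := 1/(2*s)) (by positivity)
  have h2 : 2 * (1/(2*s)) = 1/s := by field_simp
  rw [h2] at hu
  have hineq : (s - 1/2) * Real.exp (1/s) ≤ s + 1/2 := by
    have := mul_le_mul_of_nonneg_left hu hs0.le
    calc (s - 1/2) * Real.exp (1/s) = s * ((1 - 1/(2*s)) * Real.exp (1/s)) := by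
          field_simp
      _ ≤ s * (1 + 1/(2*s)) := this
      _ = s + 1/2 := by field_simp
  have hpos : 0 < (s - 1/2) * Real.exp (1/s) := mul_pos (by linarith) (Real.exp_pos _)
  have := Real.log_le_log hpos hineq
  rw [Real.log_mul (by linarith) (Real.exp_pos _).ne', Real.log_exp] at this
  linarith

lemma psi_ge_log {t : ℝ} (ht : 1/2 < t) : Real.log (t - 1/2) ≤ psi t := by
  have chain : ∀ n : ℕ, psi (t + n) - Real.log (t + n - 1/2) ≤ psi t - Real.log (t - 1/2) := by
    intro n
    induction n with
    | zero => simp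
    | succ n ih =>
      have hn : (0:ℝ) ≤ n := Nat.cast_nonneg n
      have hs : 1/2 < t + n := by linarith
      have hstep : psi (t + n + 1) - Real.log (t + n + 1/2) ≤ psi (t+n) - Real.log (t + n - 1/2) := by
        rw [psi_add_one (by linarith)]
        have := log_step hs
        linarith
      have e1 : t + ((n+1:ℕ):ℝ) = t + n + 1 := by push_cast; ring
      rw [e1]
      have e2 : t + (n:ℝ) + 1 - 1/2 = t + n + 1/2 := by ring
      rw [e2]
      exact le_trans hstep ih
  have bound : ∀ n : ℕ, -(1/2) * (1/(t + n)) ≤ psi t - Real.log (t - 1/2) := by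
    intro n
    have hn : (0:ℝ) ≤ n := Nat.cast_nonneg n
    have h1 : 1 < t + ((n+1:ℕ):ℝ) := by push_cast; linarith
    have h2 := log_sub_one_le_psi h1
    have h3 := chain (n+1)
    have e3 : t + ((n+1:ℕ):ℝ) - 1 = t + n := by push_cast; ring
    have e4 : t + ((n+1:ℕ):ℝ) - 1/2 = t + n + 1/2 := by push_cast; ring
    rw [e3] at h2
    rw [e4] at h3
    have hpos : (0:ℝ) < t + n := by linarith
    have h5 : Real.log (t+n+1/2) - Real.log (t+n) ≤ (1/2) * (1/(t+n)) := by
      have hd : Real.log (t+n+1/2) - Real.log (t+n) = Real.log ((t+n+1/2)/(t+n)) := by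
        rw [Real.log_div (by linarith) hpos.ne']
      rw [hd]
      have h6 := Real.log_le_sub_one_of_pos (x := (t+n+1/2)/(t+n)) (by positivity)
      have he : (t+n+1/2)/(t+n) - 1 = (1/2) * (1/(t+n)) := by field_simp; ring
      rw [he] at h6
      exact h6
    linarith
  have hlim : Filter.Tendsto (fun n : ℕ => -(1/2) * (1/(t + (n:ℝ)))) atTop (nhds 0) := by
    have h1 : Filter.Tendsto (fun n : ℕ => t + (n:ℝ)) atTop atTop :=
      tendsto_atTop_add_const_left _ t tendsto_natCast_atTop_atTop
    have h2 : Filter.Tendsto (fun n : ℕ => (t + (n:ℝ))⁻¹) atTop (nhds 0) :=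
      tendsto_inv_atTop_zero.comp h1
    have h3 := h2.const_mul (-(1/2) : ℝ)
    simpa [one_div] using h3
  have h0 := le_of_tendsto' hlim bound
  linarith

noncomputable def fB (x : ℝ) : ℝ := Real.log (Real.Gamma (x + 1/2)) - x * Real.log x + x

lemma hasDerivAt_fB {x : ℝ} (hx : 0 < x) :
    HasDerivAt fB (psi (x + 1/2) - (Real.log x + 1) + 1) x := by
  have h1 : HasDerivAt (fun y => Real.log (Real.Gamma (y + 1/2))) (psi (x + 1/2)) x :=
    (hasDerivAt_logGamma (by linarith)).comp_add_const x (1/2)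
  have h2 := Real.hasDerivAt_mul_log hx.ne'
  exact (h1.sub h2).add (hasDerivAt_id x)

lemma fB_mono : MonotoneOn fB (Set.Ici (1/2 : ℝ)) := by
  apply monotoneOn_of_deriv_nonneg (convex_Ici _)
  · exact fun x hx =>
      (hasDerivAt_fB (by have := mem_Ici.1 hx; linarith)).differentiableAt.continuousAt.continuousWithinAt
  · intro x hx
    rw [interior_Ici] at hx
    exact (hasDerivAt_fB (by have := mem_Ioi.1 hx; linarith)).differentiableAt.differentiableWithinAt
  · intro x hx
    rw [interior_Ici] at hx
    have hx' : 1/2 < x := mem_Ioi.1 hx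
    rw [(hasDerivAt_fB (by linarith)).deriv]
    have h := psi_ge_log (t := x + 1/2) (by linarith)
    have e : x + 1/2 - 1/2 = x := by ring
    rw [e] at h
    linarith

lemma Gamma_nat_add_half (n : ℕ) :
    Real.Gamma (n + 1/2) = Real.sqrt π * (2*n).factorial / (4^n * n.factorial) := by
  induction n with
  | zero =>
    norm_num [Real.Gamma_one_half_eq]
  | succ n ih =>
    have h : ((n:ℝ)+1) + 1/2 = (n + 1/2) + 1 := by ring
    push_cast
    rw [h, Real.Gamma_add_one (by positivity), ih]
    have hf1 : (2*(n+1)).factorial = (2*n+2) * ((2*n+1) * (2*n).factorial) := by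
      have : 2*(n+1) = (2*n+1) + 1 := by ring
      rw [this, Nat.factorial_succ, Nat.factorial_succ]
    have hf2 : (n+1).factorial = (n+1) * n.factorial := Nat.factorial_succ n
    rw [hf1, hf2]
    have h4 : (0:ℝ) < 4^n := by positivity
    have hnf : (0:ℝ) < (n.factorial : ℝ) := by exact_mod_cast Nat.factorial_pos n
    push_cast
    field_simp
    ring

lemma st_le {n : ℕ} (hn : 1 ≤ n) :
    Stirling.stirlingSeq (2*n) ≤ Stirling.stirlingSeq n := by
  obtain ⟨m, rfl⟩ := Nat.exists_eq_add_of_le hn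
  have h := Stirling.stirlingSeq'_antitone (show m ≤ 2*m+1 by omega)
  simpa [Function.comp, Nat.succ_eq_add_one, show 2*(1+m) = 2*m+1+1 by ring, show 2*(m+1) = 2*m+1+1 by ring, Nat.add_comm 1 m] using h

lemma Gamma_nat_le {n : ℕ} (hn : 1 ≤ n) :
    Real.Gamma (n + 1/2) ≤ Real.sqrt (2*π) * ((n:ℝ)/Real.exp 1)^n := by
  have hn0 : (0:ℝ) < n := by exact_mod_cast hn
  set P : ℝ := ((n:ℝ)/Real.exp 1)^n with hP
  have hPpos : 0 < P := by positivity
  have hsq : (0:ℝ) < Real.sqrt (2*n) := Real.sqrt_pos.2 (by positivity)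
  have hst := st_le hn
  rw [Stirling.stirlingSeq, Stirling.stirlingSeq] at hst
  have hb1 : (0:ℝ) < Real.sqrt (2*(2*n:ℕ)) * (((2*n:ℕ):ℝ)/Real.exp 1)^(2*n) := by
    have : (0:ℝ) < ((2*n:ℕ):ℝ) := by positivity
    positivity
  have hb2 : (0:ℝ) < Real.sqrt (2*n) * ((n:ℝ)/Real.exp 1)^n := by positivity
  have key := (div_le_div_iff₀ hb1 hb2).1 hst
  have hbig : Real.sqrt (2*((2*n:ℕ):ℝ)) * (((2*n:ℕ):ℝ)/Real.exp 1)^(2*n)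
      = Real.sqrt 2 * Real.sqrt (2*n) * (4^n * (P*P)) := by
    have e1 : (2*((2*n:ℕ):ℝ)) = 2*(2*(n:ℝ)) := by push_cast; ring
    have e2 : Real.sqrt (2*(2*(n:ℝ))) = Real.sqrt 2 * Real.sqrt (2*n) := by
      rw [← Real.sqrt_mul (by norm_num : (0:ℝ) ≤ 2)]
    have e3 : (((2*n:ℕ):ℝ)/Real.exp 1)^(2*n) = 4^n * (P*P) := by
      push_cast
      rw [hP]
      rw [show (2*(n:ℝ))/Real.exp 1 = 2 * ((n:ℝ)/Real.exp 1) by ring]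
      rw [mul_pow, pow_mul, pow_mul]
      ring_nf
    rw [e1, e2, e3]
  rw [hbig] at key
  have step1 : ((2*n).factorial : ℝ) ≤ Real.sqrt 2 * 4^n * P * n.factorial := by
    have h2 : ((2*n).factorial : ℝ) * (Real.sqrt (2*n) * P)
        ≤ (Real.sqrt 2 * 4^n * P * n.factorial) * (Real.sqrt (2*n) * P) := by
      calc ((2*n).factorial : ℝ) * (Real.sqrt (2*n) * P) ≤
          (n.factorial : ℝ) * (Real.sqrt 2 * Real.sqrt (2*n) * (4^n * (P*P))) := key
        _ = (Real.sqrt 2 * 4^n * P * n.factorial) * (Real.sqrt (2*n) * P) := by ring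
    exact le_of_mul_le_mul_right h2 (by positivity)
  rw [Gamma_nat_add_half]
  have h4 : (0:ℝ) < 4^n * (n.factorial:ℝ) := by
    have : (0:ℝ) < (n.factorial:ℝ) := by exact_mod_cast Nat.factorial_pos n
    positivity
  rw [div_le_iff₀ h4]
  calc Real.sqrt π * ((2*n).factorial:ℝ) ≤ Real.sqrt π * (Real.sqrt 2 * 4^n * P * n.factorial) := by
        apply mul_le_mul_of_nonneg_left step1 (Real.sqrt_nonneg _)
    _ = Real.sqrt (2*π) * P * (4^n * n.factorial) := by
        rw [Real.sqrt_mul (by norm_num : (0:ℝ) ≤ 2)]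
        ring

lemma hrpow {x : ℝ} (hx : 0 < x) :
    (x / Real.exp 1) ^ x = Real.exp (x * Real.log x - x) := by
  rw [Real.rpow_def_of_pos (div_pos hx (Real.exp_pos 1)),
    Real.log_div hx.ne' (Real.exp_pos 1).ne', Real.log_exp]
  congr 1
  ring

lemma batir_lower {x : ℝ} (hx : 1/2 ≤ x) :
    Real.sqrt (2 * Real.exp 1) * (x / Real.exp 1) ^ x ≤ Real.Gamma (x + 1/2) := by
  have hx0 : 0 < x := by linarith
  have hΓpos : 0 < Real.Gamma (x + 1/2) := Real.Gamma_pos_of_pos (by linarith)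
  have hfb := fB_mono Set.self_mem_Ici (Set.mem_Ici.2 hx) hx
  have hfB12 : fB (1/2) = (Real.log 2 + 1)/2 := by
    simp only [fB, show (1/2 + 1/2 : ℝ) = 1 by norm_num, Real.Gamma_one, Real.log_one,
      show Real.log (1/2 : ℝ) = -Real.log 2 by rw [one_div, Real.log_inv]]
    ring
  have h1 : (Real.log 2 + 1)/2 + (x * Real.log x - x) ≤ Real.log (Real.Gamma (x + 1/2)) := by
    have : fB x = Real.log (Real.Gamma (x + 1/2)) - x * Real.log x + x := rfl
    rw [hfB12] at hfb
    rw [this] at hfb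
    linarith
  have hsqrt : Real.sqrt (2 * Real.exp 1) = Real.exp ((Real.log 2 + 1)/2) := by
    rw [show (Real.log 2 + 1)/2 = Real.log (2 * Real.exp 1)/2 by
      rw [Real.log_mul two_ne_zero (Real.exp_pos 1).ne', Real.log_exp],
      ← Real.log_sqrt (by positivity), Real.exp_log (Real.sqrt_pos.2 (by positivity))]
  calc Real.sqrt (2 * Real.exp 1) * (x / Real.exp 1) ^ x
      = Real.exp ((Real.log 2 + 1)/2 + (x * Real.log x - x)) := by
        rw [hsqrt, hrpow hx0, ← Real.exp_add]
    _ ≤ Real.exp (Real.log (Real.Gamma (x + 1/2))) := Real.exp_le_exp.2 h1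
    _ = Real.Gamma (x + 1/2) := Real.exp_log hΓpos

lemma batir_upper {x : ℝ} (hx : 1/2 ≤ x) :
    Real.Gamma (x + 1/2) ≤ Real.sqrt (2 * π) * (x / Real.exp 1) ^ x := by
  have hx0 : 0 < x := by linarith
  have hΓpos : 0 < Real.Gamma (x + 1/2) := Real.Gamma_pos_of_pos (by linarith)
  set n : ℕ := ⌈x⌉₊ with hn
  have hxn : x ≤ n := Nat.le_ceil x
  have hn1 : 1 ≤ n := by
    rw [hn]
    exact Nat.one_le_iff_ne_zero.2 (by
      intro hc
      have := Nat.ceil_eq_zero.1 hc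
      linarith)
  have hn0 : (1:ℝ) ≤ (n:ℝ) := by exact_mod_cast hn1
  have hfb := fB_mono (Set.mem_Ici.2 hx) (Set.mem_Ici.2 (by linarith : (1/2:ℝ) ≤ (n:ℝ))) hxn
  have hΓnpos : 0 < Real.Gamma ((n:ℝ) + 1/2) := Real.Gamma_pos_of_pos (by linarith)
  have hPn : (0:ℝ) < ((n:ℝ)/Real.exp 1)^n := by positivity
  have hfBn : fB (n:ℝ) ≤ Real.log (Real.sqrt (2*π)) := by
    have hle := Gamma_nat_le hn1
    have hlog := Real.log_le_log hΓnpos hle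
    rw [Real.log_mul (Real.sqrt_pos.2 (by positivity)).ne' hPn.ne', Real.log_pow,
      Real.log_div (by linarith : (n:ℝ) ≠ 0) (Real.exp_pos 1).ne', Real.log_exp] at hlog
    have : fB (n:ℝ) = Real.log (Real.Gamma ((n:ℝ) + 1/2)) - (n:ℝ) * Real.log (n:ℝ) + n := rfl
    rw [this]
    push_cast at hlog ⊢
    nlinarith [hlog]
  have h1 : Real.log (Real.Gamma (x + 1/2)) ≤ Real.log (Real.sqrt (2*π)) + (x * Real.log x - x) := by
    have hfx : fB x = Real.log (Real.Gamma (x + 1/2)) - x * Real.log x + x := rfl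
    have := hfb.trans hfBn
    rw [hfx] at this
    linarith
  calc Real.Gamma (x + 1/2) = Real.exp (Real.log (Real.Gamma (x + 1/2))) := (Real.exp_log hΓpos).symm
    _ ≤ Real.exp (Real.log (Real.sqrt (2*π)) + (x * Real.log x - x)) := Real.exp_le_exp.2 h1
    _ = Real.sqrt (2*π) * (x / Real.exp 1) ^ x := by
        rw [Real.exp_add, Real.exp_log (Real.sqrt_pos.2 (by positivity)), hrpow hx0]

end BatirAux

open BatirAux in
theorem batir_gamma_bounds :
    (∀ x : ℝ, 1 / 2 ≤ x →
      Real.sqrt (2 * Real.exp 1) * (x / Real.exp 1) ^ x ≤ Real.Gamma (x + 1 / 2) ∧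
      Real.Gamma (x + 1 / 2) ≤ Real.sqrt (2 * Real.pi) * (x / Real.exp 1) ^ x) ∧
    (∀ h x : ℝ, 0 ≤ h → h + 1 / 2 ≤ x →
      Real.Gamma (x - h + 1 / 2) / Real.Gamma (x + 1 / 2) ≤
        Real.sqrt (Real.pi / Real.exp 1) * (Real.exp 1 / x) ^ h) := by
  constructor
  · exact fun x hx => ⟨batir_lower hx, batir_upper hx⟩
  · intro h x hh hx
    have hy2 : (1/2:ℝ) ≤ x - h := by linarith
    have hx2 : (1/2:ℝ) ≤ x := by linarith
    have hy0 : (0:ℝ) < x - h := by linarith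
    have hx0 : (0:ℝ) < x := by linarith
    have hlow := batir_lower hx2
    have huppy := batir_upper hy2
    have hdenpos : (0:ℝ) < Real.sqrt (2 * Real.exp 1) * (x / Real.exp 1) ^ x := by
      have : (0:ℝ) < (x / Real.exp 1) ^ x := Real.rpow_pos_of_pos (by positivity) x
      have h2 : (0:ℝ) < Real.sqrt (2 * Real.exp 1) := Real.sqrt_pos.2 (by positivity)
      positivity
    have h1 : Real.Gamma (x - h + 1/2) / Real.Gamma (x + 1/2) ≤
        (Real.sqrt (2*π) * ((x-h) / Real.exp 1) ^ (x-h)) /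
          (Real.sqrt (2 * Real.exp 1) * (x / Real.exp 1) ^ x) := by
      apply div_le_div₀ (by positivity) huppy hdenpos hlow
    refine h1.trans ?_
    rw [hrpow hy0, hrpow hx0]
    have hmono : Real.exp ((x-h) * Real.log (x-h) - (x-h)) ≤
        Real.exp ((x-h) * Real.log x - (x-h)) := by
      apply Real.exp_le_exp.2
      have := mul_le_mul_of_nonneg_left (Real.log_le_log hy0 (by linarith : x - h ≤ x)) hy0.le
      linarith
    have hstep : (Real.sqrt (2*π) * Real.exp ((x-h) * Real.log (x-h) - (x-h))) /
          (Real.sqrt (2 * Real.exp 1) * Real.exp (x * Real.log x - x))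
        ≤ (Real.sqrt (2*π) * Real.exp ((x-h) * Real.log x - (x-h))) /
          (Real.sqrt (2 * Real.exp 1) * Real.exp (x * Real.log x - x)) := by
      apply div_le_div_of_nonneg_right ?_ ?_
      · exact mul_le_mul_of_nonneg_left hmono (Real.sqrt_nonneg _)
      · positivity
    refine hstep.trans (le_of_eq ?_)
    have hepow : (Real.exp 1 / x) ^ h = Real.exp (h * (1 - Real.log x)) := by
      rw [Real.rpow_def_of_pos (div_pos (Real.exp_pos 1) hx0),
        Real.log_div (Real.exp_pos 1).ne' hx0.ne', Real.log_exp]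
      congr 1
      ring
    have hsqrt : Real.sqrt (2*π) = Real.sqrt (π / Real.exp 1) * Real.sqrt (2 * Real.exp 1) := by
      rw [← Real.sqrt_mul (by positivity)]
      congr 1
      field_simp
    rw [hepow, hsqrt]
    have hexpeq : Real.exp ((x-h) * Real.log x - (x-h)) =
        Real.exp (h * (1 - Real.log x)) * Real.exp (x * Real.log x - x) := by
      rw [← Real.exp_add]
      congr 1
      ring
    rw [hexpeq]
    have hne1 : Real.sqrt (2 * Real.exp 1) ≠ 0 := (Real.sqrt_pos.2 (by positivity)).ne'
    have hne2 : Real.exp (x * Real.log x - x) ≠ 0 := (Real.exp_pos _).ne'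
    field_simp
end
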